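/- Let R be a graded K-algebra with R_0 = K, I a homogeneous ideal minimally generated by f_1,...,f_s of degree d, and L ⊂ S = R[T_1,...,T_s] the ideal of relations of the Rees algebra of I. If L_{(m,2m)} = 0 (no relations of bidegree (m, md)), then the first syzygy module Ω_1(I^m) is isomorphic as a graded R-module to L_{(m,−)}, the degree-m graded piece of L in the T-grading. -/

import Mathlib

open MvPolynomial

noncomputable def reesMap {R : Type*} [CommRing R] {s : ℕ} (f : Fin s → R) :
    MvPolynomial (Fin s) R →ₐ[R] Polynomial R :=
  MvPolynomial.aeval fun i => Polynomial.C (f i) * Polynomial.X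

lemma reesMap_of_isHomogeneous {R : Type*} [CommRing R] {s : ℕ} (f : Fin s → R)
    {m : ℕ} {F : MvPolynomial (Fin s) R} (hF : F.IsHomogeneous m) :
    reesMap f F = Polynomial.C (MvPolynomial.eval f F) * Polynomial.X ^ m := by
  conv_lhs => rw [← F.support_sum_monomial_coeff]
  rw [map_sum, eval_eq]
  have key : ∀ α ∈ F.support,
      reesMap f (monomial α (coeff α F))
        = Polynomial.C (coeff α F * ∏ i ∈ α.support, f i ^ α i) * Polynomial.X ^ m := by
    intro α hα
    have hdeg : (∑ i ∈ α.support, α i) = m := by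
      have := hF (mem_support_iff.mp hα)
      simpa [Finsupp.weight_apply, Finsupp.sum, mul_comm] using this
    rw [reesMap, aeval_monomial, Finsupp.prod]
    rw [show (algebraMap R (Polynomial R)) (coeff α F) = Polynomial.C (coeff α F) from rfl]
    have : ∏ i ∈ α.support, (Polynomial.C (f i) * Polynomial.X) ^ α i
        = Polynomial.C (∏ i ∈ α.support, f i ^ α i) * Polynomial.X ^ m := by
      simp_rw [mul_pow, Finset.prod_mul_distrib, ← Polynomial.C_pow, ← map_prod,
        Finset.prod_pow_eq_pow_sum, hdeg]
    rw [this, mul_left_comm, ← mul_assoc, ← map_mul, mul_comm (coeff α F)]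
  rw [Finset.sum_congr rfl key, ← Finset.sum_mul, ← map_sum]

lemma mem_ker_reesMap_iff {R : Type*} [CommRing R] {s : ℕ} (f : Fin s → R)
    {m : ℕ} {F : MvPolynomial (Fin s) R} (hF : F.IsHomogeneous m) :
    F ∈ RingHom.ker (reesMap f).toRingHom ↔ MvPolynomial.eval f F = 0 := by
  rw [RingHom.mem_ker]
  change reesMap f F = 0 ↔ _
  rw [reesMap_of_isHomogeneous f hF]
  constructor
  · intro h0
    have := congrArg (fun p => Polynomial.coeff p m) h0
    simpa using this
  · intro h0; rw [h0]; simp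

lemma prod_pow_mem_pow {R : Type*} [CommRing R] {s : ℕ} {f : Fin s → R} {I : Ideal R}
    (hf : ∀ i, f i ∈ I) (α : Fin s →₀ ℕ) :
    (∏ i, f i ^ α i) ∈ I ^ (∑ i, α i) := by
  classical
  have : ∀ (u : Finset (Fin s)), (∏ i ∈ u, f i ^ α i) ∈ I ^ (∑ i ∈ u, α i) := by
    intro u
    induction u using Finset.induction_on with
    | empty => simp [Ideal.one_eq_top]
    | insert a u' hx ih =>
      rw [Finset.prod_insert hx, Finset.sum_insert hx, pow_add]
      exact Ideal.mul_mem_mul (Ideal.pow_mem_pow (hf a) _) ih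
  exact this Finset.univ

lemma pow_le_span_monomials {R : Type*} [CommRing R] {s : ℕ} (f : Fin s → R) (m : ℕ) :
    (Ideal.span (Set.range f)) ^ m ≤
      Ideal.span {x | ∃ α : Fin s →₀ ℕ, (∑ i, α i) = m ∧ x = ∏ i, f i ^ α i} := by
  induction m with
  | zero =>
    rw [pow_zero, Ideal.one_eq_top, top_le_iff, Ideal.eq_top_iff_one]
    exact Ideal.subset_span ⟨0, by simp, by simp⟩
  | succ m ih =>
    rw [pow_succ]
    refine le_trans (mul_le_mul' ih le_rfl) ?_
    rw [Ideal.span_mul_span']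
    rw [Ideal.span_le]
    rintro z hz
    rw [Set.mem_mul] at hz
    obtain ⟨x, ⟨α, hα, rfl⟩, y, ⟨j, rfl⟩, rfl⟩ := hz
    apply Ideal.subset_span
    refine ⟨α + Finsupp.single j 1, ?_, ?_⟩
    · simp [Finsupp.add_apply, Finsupp.single_apply, Finset.sum_add_distrib, hα,
        Finset.sum_ite_eq]
    · simp_rw [Finsupp.add_apply, pow_add, Finset.prod_mul_distrib]
      congr 1
      rw [Finset.prod_eq_single j]
      · simp
      · intro b _ hb
        rw [Finsupp.single_apply, if_neg (Ne.symm hb), pow_zero]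
      · simp

lemma mem_spanK_of_mem_span {K R : Type*} [Field K] [CommRing R] [Algebra K R]
    (𝒜 : ℕ → Submodule K R) [GradedAlgebra 𝒜]
    (h𝒜0 : ∀ r ∈ 𝒜 0, ∃ c : K, r = algebraMap K R c)
    {n : ℕ} {S : Set R} (hS : ∀ y ∈ S, y ∈ 𝒜 n) {x : R} (hx : x ∈ 𝒜 n)
    (hxs : x ∈ Ideal.span S) : x ∈ Submodule.span K S := by
  obtain ⟨N, r, y, hsum⟩ := Submodule.mem_span_set'.mp hxs
  have hx' : x = ∑ i, GradedRing.proj 𝒜 n (r i * (y i : R)) := by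
    rw [← map_sum]
    have : (∑ i, r i * (y i : R)) = x := by
      rw [← hsum]; simp [smul_eq_mul]
    rw [this, GradedRing.proj_apply, DirectSum.decompose_of_mem_same 𝒜 hx]
  rw [hx']
  apply Submodule.sum_mem
  intro i _
  have hyi : (y i : R) ∈ 𝒜 n := hS _ (y i).2
  have hdec : (DirectSum.decompose 𝒜 (r i * (y i : R)) (0 + n) : R)
      = (DirectSum.decompose 𝒜 (r i) 0 : R) * (y i : R) :=
    DirectSum.coe_decompose_mul_add_of_right_mem 𝒜 hyi
  rw [zero_add] at hdec
  obtain ⟨c, hc⟩ := h𝒜0 _ (SetLike.coe_mem (DirectSum.decompose 𝒜 (r i) 0))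
  rw [GradedRing.proj_apply, hdec, hc, ← Algebra.smul_def]
  exact Submodule.smul_mem _ _ (Submodule.subset_span (y i).2)

set_option maxHeartbeats 1000000 in
/-- Let `R` be a graded `K`-algebra with `R₀ = K`, `I` a homogeneous
ideal minimally generated by `f_1,…,f_s` of degree `d`, and `L ⊂ S = R[T_1,…,T_s]` the
relation ideal of the Rees algebra of `I`.  If `L` has no nonzero element of bidegree
`(m, md)` (i.e. no `T`-homogeneous relation of `T`-degree `m` with coefficients in `𝒜 0`),
then the first syzygy module `Ω₁(Iᵐ)` — the kernel of the map `Rᵗ → R` given by any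
minimal homogeneous generating set `h_1,…,h_t` of `Iᵐ` — is isomorphic as an `R`-module
to `L_{(m,−)}`, the `T`-degree-`m` graded piece of `L`. -/
theorem first_syzygy_iso_relations_of_T_degree_m
    {K R : Type*} [Field K] [CommRing R] [Algebra K R]
    (𝒜 : ℕ → Submodule K R) [GradedAlgebra 𝒜]
    (h𝒜0 : ∀ r ∈ 𝒜 0, ∃ c : K, r = algebraMap K R c)
    (I : Ideal R) (d s m : ℕ) (hm : 1 ≤ m) (f : Fin s → R)
    (hfhom : ∀ a, f a ∈ 𝒜 d)
    (hfspan : Ideal.span (Set.range f) = I)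
    (hfmin : ∀ a : Fin s, Ideal.span (f '' {b | b ≠ a}) ≠ I)
    (hvanish : ∀ F ∈ RingHom.ker (reesMap f).toRingHom, F.IsHomogeneous m →
      (∀ α, MvPolynomial.coeff α F ∈ 𝒜 0) → F = 0) :
    ∀ (t : ℕ) (h : Fin t → R), (∀ a, h a ∈ 𝒜 (m * d)) →
      Ideal.span (Set.range h) = I ^ m →
      (∀ a : Fin t, Ideal.span (h '' {b | b ≠ a}) ≠ I ^ m) →
      Nonempty
        ((LinearMap.ker (∑ a : Fin t, (LinearMap.proj a : (Fin t → R) →ₗ[R] R).smulRight (h a)))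
          ≃ₗ[R]
        ↥((Submodule.restrictScalars R (RingHom.ker (reesMap f).toRingHom)) ⊓
          MvPolynomial.homogeneousSubmodule (Fin s) R m)) := by
  classical
  intro t h hhom hspan hmin
  by_cases hR : Subsingleton R
  · haveI : Subsingleton (MvPolynomial (Fin s) R) :=
      ⟨fun a b => by ext α; exact Subsingleton.elim _ _⟩
    exact ⟨{ toFun := fun _ => 0
             invFun := fun _ => 0
             map_add' := fun _ _ => Subsingleton.elim _ _
             map_smul' := fun _ _ => Subsingleton.elim _ _
             left_inv := fun x => Subsingleton.elim _ _
             right_inv := fun x => Subsingleton.elim _ _ }⟩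
  have : Nontrivial R := not_subsingleton_iff_nontrivial.mp hR
  -- the set of exponents of degree m
  set Δ : Finset (Fin s →₀ ℕ) := Finset.finsuppAntidiag (Finset.univ : Finset (Fin s)) m with hΔdef
  have hΔmem : ∀ {α : Fin s →₀ ℕ}, α ∈ Δ ↔ (∑ i, α i) = m := by
    intro α
    rw [hΔdef, Finset.mem_finsuppAntidiag]
    exact ⟨fun ⟨h1, _⟩ => h1, fun h1 => ⟨h1, Finset.subset_univ _⟩⟩
  set g : {β // β ∈ Δ} → R := fun β => ∏ i, f i ^ β.1 i with hgdef
  have hdegΔ : ∀ (β : {β // β ∈ Δ}), (β.1).degree = m := by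
    intro β
    rw [Finsupp.degree_apply]
    rw [Finset.sum_subset (Finset.subset_univ _)
      (fun i _ hi => Finsupp.notMem_support_iff.mp hi)]
    exact hΔmem.mp β.2
  have hfI : ∀ i, f i ∈ I := fun i => hfspan ▸ Ideal.subset_span ⟨i, rfl⟩
  have hgI : ∀ β, g β ∈ I ^ m := by
    intro β
    have := prod_pow_mem_pow hfI β.1
    rwa [hΔmem.mp β.2] at this
  have hghom : ∀ β, g β ∈ 𝒜 (m * d) := by
    intro β
    have := SetLike.prod_pow_mem_graded 𝒜 (fun _ => d) f (fun i => β.1 i)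
      (F := Finset.univ) (fun i _ => hfhom i)
    rwa [← Finset.sum_smul, hΔmem.mp β.2, smul_eq_mul] at this
  have hsupΔ : ∀ {F : MvPolynomial (Fin s) R}, F.IsHomogeneous m → F.support ⊆ Δ := by
    intro F hF α hα
    rw [hΔmem]
    have h2 := hF (mem_support_iff.mp hα)
    rw [← Finset.sum_subset (Finset.subset_univ α.support)
      (fun i _ hi => Finsupp.notMem_support_iff.mp hi)]
    simpa [Finsupp.weight_apply, Finsupp.sum, mul_comm] using h2
  have reprΔ : ∀ {F : MvPolynomial (Fin s) R}, F.IsHomogeneous m →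
      (∑ β : {β // β ∈ Δ}, monomial β.1 (coeff β.1 F)) = F := by
    intro F hF
    rw [Finset.sum_coe_sort Δ (fun α => monomial α (coeff α F))]
    conv_rhs => rw [← F.support_sum_monomial_coeff]
    refine (Finset.sum_subset (hsupΔ hF) ?_).symm
    intro α _ hα
    rw [notMem_support_iff.mp hα, map_zero]
  have coeffΔ : ∀ (v : {β // β ∈ Δ} → R) (β : {β // β ∈ Δ}),
      coeff β.1 (∑ β' : {β // β ∈ Δ}, monomial β'.1 (v β')) = v β := by
    intro v β
    rw [MvPolynomial.coeff_sum]
    rw [Finset.sum_eq_single β]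
    · rw [coeff_monomial, if_pos rfl]
    · intro β' _ hβ'
      rw [coeff_monomial, if_neg (fun hh => hβ' (Subtype.ext hh))]
    · intro hβ; exact absurd (Finset.mem_univ β) hβ
  have hmonhom : ∀ (v : {β // β ∈ Δ} → R),
      (∑ β' : {β // β ∈ Δ}, monomial β'.1 (v β')).IsHomogeneous m := by
    intro v
    exact IsHomogeneous.sum _ _ _ fun β' _ => isHomogeneous_monomial _ (hdegΔ β')
  have hevalmon : ∀ (v : {β // β ∈ Δ} → R),
      MvPolynomial.eval f (∑ β' : {β // β ∈ Δ}, monomial β'.1 (v β')) = ∑ β', v β' * g β' := by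
    intro v
    rw [map_sum]
    refine Finset.sum_congr rfl fun β' _ => ?_
    rw [eval_monomial, hgdef]
    congr 1
    exact Finsupp.prod_pow _ _
  have hhIm : ∀ a, h a ∈ I ^ m := fun a => hspan ▸ Ideal.subset_span ⟨a, rfl⟩
  have hhK : ∀ a, h a ∈ Submodule.span K (Set.range g) := by
    intro a
    refine mem_spanK_of_mem_span 𝒜 h𝒜0 ?_ (hhom a) ?_
    · rintro y ⟨β, rfl⟩; exact hghom β
    · have h1 : h a ∈ (Ideal.span (Set.range f)) ^ m := by rw [hfspan]; exact hhIm a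
      have h2 := pow_le_span_monomials f m h1
      refine Ideal.span_mono ?_ h2
      rintro x ⟨α, hα, rfl⟩
      exact ⟨⟨α, hΔmem.mpr hα⟩, rfl⟩
  have hgK : ∀ β, g β ∈ Submodule.span K (Set.range h) := by
    intro β
    refine mem_spanK_of_mem_span 𝒜 h𝒜0 ?_ (hghom β) ?_
    · rintro y ⟨a, rfl⟩; exact hhom a
    · rw [hspan]; exact hgI β
  -- linear independence of h over K, from minimality
  have hlih : ∀ (v : Fin t → K), (∑ a, v a • h a) = 0 → ∀ a, v a = 0 := by
    intro v hv
    by_contra hne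
    push_neg at hne
    obtain ⟨a0, ha0⟩ := hne
    apply hmin a0
    refine le_antisymm ?_ ?_
    · rw [← hspan]
      exact Ideal.span_mono (Set.image_subset_range h _)
    · rw [← hspan, Ideal.span_le]
      rintro x ⟨a, rfl⟩
      by_cases hA : a = a0
      · subst hA
        have h1 : v a • h a = - ∑ b ∈ Finset.univ.erase a, v b • h b := by
          rw [eq_neg_iff_add_eq_zero, Finset.add_sum_erase _ (fun b => v b • h b) (Finset.mem_univ a)]
          exact hv
        have key : h a = ∑ b ∈ Finset.univ.erase a,
            algebraMap K R (-(v a)⁻¹ * v b) * h b := by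
          have h2 : h a = (v a)⁻¹ • (v a • h a) := by
            rw [smul_smul, inv_mul_cancel₀ ha0, one_smul]
          rw [h2, h1, smul_neg, Finset.smul_sum, ← Finset.sum_neg_distrib]
          refine Finset.sum_congr rfl fun b _ => ?_
          rw [smul_smul, ← neg_smul, Algebra.smul_def]
          congr 2
          ring
        rw [key]
        refine Submodule.sum_mem _ fun b hb => ?_
        exact Ideal.mul_mem_left _ _
          (Ideal.subset_span ⟨b, (Finset.mem_erase.mp hb).1, rfl⟩)
      · exact Ideal.subset_span ⟨a, hA, rfl⟩
  -- linear independence of g over K, from hvanish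
  have hlig : ∀ (v : {β // β ∈ Δ} → K), (∑ β, v β • g β) = 0 → ∀ β, v β = 0 := by
    intro v hv β
    set F : MvPolynomial (Fin s) R :=
      ∑ β' : {β // β ∈ Δ}, monomial β'.1 (algebraMap K R (v β')) with hFdef
    have hFhom : F.IsHomogeneous m := hmonhom _
    have hFeval : MvPolynomial.eval f F = 0 := by
      rw [hFdef, hevalmon]
      rw [← hv]
      exact Finset.sum_congr rfl fun β' _ => (Algebra.smul_def _ _).symm
    have hFker : F ∈ RingHom.ker (reesMap f).toRingHom :=
      (mem_ker_reesMap_iff f hFhom).mpr hFeval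
    have hFcoeff : ∀ α, coeff α F ∈ 𝒜 0 := by
      intro α
      rw [hFdef, MvPolynomial.coeff_sum]
      refine Submodule.sum_mem _ fun β' _ => ?_
      rw [coeff_monomial]
      split
      · exact SetLike.algebraMap_mem_graded 𝒜 _
      · exact Submodule.zero_mem _
    have hF0 : F = 0 := hvanish F hFker hFhom hFcoeff
    have h5 : coeff β.1 F = algebraMap K R (v β) := by
      rw [hFdef]; exact coeffΔ _ β
    rw [hF0, coeff_zero] at h5
    exact ((injective_iff_map_eq_zero _).mp (RingHom.injective (algebraMap K R)) _ h5.symm)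
  -- change of basis matrices over K
  choose c hc using fun a => (Submodule.mem_span_range_iff_exists_fun K).mp (hhK a)
  choose e he using fun β => (Submodule.mem_span_range_iff_exists_fun K).mp (hgK β)
  have hcd : ∀ a a', (∑ β, c a β * e β a') = if a' = a then 1 else 0 := by
    intro a a'
    have hrep1 : ∑ a'', (∑ β, c a β * e β a'') • h a'' = h a := by
      have step : ∀ a'', (∑ β, c a β * e β a'') • h a''
          = ∑ β, c a β • (e β a'' • h a'') := by
        intro a''
        rw [Finset.sum_smul]
        exact Finset.sum_congr rfl fun β _ => (mul_smul _ _ _)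
      rw [Finset.sum_congr rfl fun a'' _ => step a'', Finset.sum_comm]
      calc ∑ β, ∑ a'', c a β • (e β a'' • h a'')
          = ∑ β, c a β • (∑ a'', e β a'' • h a'') :=
            Finset.sum_congr rfl fun β _ => (Finset.smul_sum).symm
        _ = ∑ β, c a β • g β := Finset.sum_congr rfl fun β _ => by rw [he β]
        _ = h a := hc a
    have h0 : ∑ a'', ((∑ β, c a β * e β a'') - (if a'' = a then 1 else 0)) • h a'' = 0 := by
      simp only [sub_smul, Finset.sum_sub_distrib, hrep1, ite_smul, one_smul, zero_smul,
        Finset.sum_ite_eq', Finset.mem_univ, if_true, sub_self]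
    exact sub_eq_zero.mp (hlih _ h0 a')
  have hec : ∀ β β', (∑ a, e β a * c a β') = if β' = β then 1 else 0 := by
    intro β β'
    have hrep1 : ∑ β'', (∑ a, e β a * c a β'') • g β'' = g β := by
      have step : ∀ β'', (∑ a, e β a * c a β'') • g β''
          = ∑ a, e β a • (c a β'' • g β'') := by
        intro β''
        rw [Finset.sum_smul]
        exact Finset.sum_congr rfl fun a _ => (mul_smul _ _ _)
      rw [Finset.sum_congr rfl fun β'' _ => step β'', Finset.sum_comm]
      calc ∑ a, ∑ β'', e β a • (c a β'' • g β'')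
          = ∑ a, e β a • (∑ β'', c a β'' • g β'') :=
            Finset.sum_congr rfl fun a _ => (Finset.smul_sum).symm
        _ = ∑ a, e β a • h a := Finset.sum_congr rfl fun a _ => by rw [hc a]
        _ = g β := he β
    have h0 : ∑ β'', ((∑ a, e β a * c a β'') - (if β'' = β then 1 else 0)) • g β'' = 0 := by
      simp only [sub_smul, Finset.sum_sub_distrib, hrep1, ite_smul, one_smul, zero_smul,
        Finset.sum_ite_eq', Finset.mem_univ, if_true, sub_self]
    exact sub_eq_zero.mp (hlig _ h0 β')
  -- matrices over R
  set cR : Fin t → {β // β ∈ Δ} → R := fun a β => algebraMap K R (c a β) with hcRdef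
  set eR : {β // β ∈ Δ} → Fin t → R := fun β a => algebraMap K R (e β a) with heRdef
  have hcR : ∀ a, ∑ β, cR a β * g β = h a := by
    intro a
    rw [← hc a]
    exact Finset.sum_congr rfl fun β _ => (Algebra.smul_def _ _).symm
  have heR : ∀ β, ∑ a, eR β a * h a = g β := by
    intro β
    rw [← he β]
    exact Finset.sum_congr rfl fun a _ => (Algebra.smul_def _ _).symm
  have hcdR : ∀ a a', (∑ β, cR a β * eR β a') = if a' = a then 1 else 0 := by
    intro a a'
    have h8 : (algebraMap K R) (if a' = a then (1:K) else 0) = (if a' = a then (1:R) else 0) := by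
      split <;> simp
    rw [← h8, ← hcd a a', map_sum]
    simp only [hcRdef, heRdef, map_mul]
  have hecR : ∀ β β', (∑ a, eR β a * cR a β') = if β' = β then 1 else 0 := by
    intro β β'
    have h8 : (algebraMap K R) (if β' = β then (1:K) else 0) = (if β' = β then (1:R) else 0) := by
      split <;> simp
    rw [← h8, ← hec β β', map_sum]
    simp only [hcRdef, heRdef, map_mul]
  -- description of the syzygy map
  have hcomb : ∀ (x : Fin t → R),
      (∑ a : Fin t, (LinearMap.proj a : (Fin t → R) →ₗ[R] R).smulRight (h a)) x
        = ∑ a, x a * h a := by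
    intro x
    rw [LinearMap.sum_apply]
    exact Finset.sum_congr rfl fun a _ => by
      rw [LinearMap.smulRight_apply, LinearMap.proj_apply, smul_eq_mul]
  -- key evaluation identities
  have hΦkey : ∀ (x : Fin t → R),
      MvPolynomial.eval f (∑ β : {β // β ∈ Δ}, monomial β.1 (∑ a, x a * cR a β))
        = ∑ a, x a * h a := by
    intro x
    rw [hevalmon]
    calc ∑ β, (∑ a, x a * cR a β) * g β
        = ∑ β, ∑ a, x a * (cR a β * g β) := by
          refine Finset.sum_congr rfl fun β _ => ?_
          rw [Finset.sum_mul]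
          exact Finset.sum_congr rfl fun a _ => by ring
      _ = ∑ a, x a * ∑ β, cR a β * g β := by
          rw [Finset.sum_comm]
          exact Finset.sum_congr rfl fun a _ => (Finset.mul_sum _ _ _).symm
      _ = ∑ a, x a * h a := Finset.sum_congr rfl fun a _ => by rw [hcR a]
  have hΨkey : ∀ (F : MvPolynomial (Fin s) R), F.IsHomogeneous m →
      (∑ a, (∑ β : {β // β ∈ Δ}, coeff β.1 F * eR β a) * h a) = MvPolynomial.eval f F := by
    intro F hF
    have hev : MvPolynomial.eval f F = ∑ β : {β // β ∈ Δ}, coeff β.1 F * g β := by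
      conv_lhs => rw [← reprΔ hF]
      exact hevalmon _
    rw [hev]
    calc ∑ a, (∑ β : {β // β ∈ Δ}, coeff β.1 F * eR β a) * h a
        = ∑ a, ∑ β : {β // β ∈ Δ}, coeff β.1 F * (eR β a * h a) := by
          refine Finset.sum_congr rfl fun a _ => ?_
          rw [Finset.sum_mul]
          exact Finset.sum_congr rfl fun β _ => by ring
      _ = ∑ β : {β // β ∈ Δ}, coeff β.1 F * ∑ a, eR β a * h a := by
          rw [Finset.sum_comm]
          exact Finset.sum_congr rfl fun β _ => (Finset.mul_sum _ _ _).symm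
      _ = ∑ β : {β // β ∈ Δ}, coeff β.1 F * g β :=
          Finset.sum_congr rfl fun β _ => by rw [heR β]
  -- round trip identities
  have hΨΦ : ∀ (x : Fin t → R) (a' : Fin t),
      (∑ β : {β // β ∈ Δ},
        coeff β.1 (∑ β' : {β // β ∈ Δ}, monomial β'.1 (∑ a, x a * cR a β')) * eR β a') = x a' := by
    intro x a'
    calc ∑ β : {β // β ∈ Δ},
          coeff β.1 (∑ β' : {β // β ∈ Δ}, monomial β'.1 (∑ a, x a * cR a β')) * eR β a'
        = ∑ β : {β // β ∈ Δ}, (∑ a, x a * cR a β) * eR β a' := by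
          refine Finset.sum_congr rfl fun β _ => ?_
          rw [coeffΔ (fun β' => ∑ a, x a * cR a β') β]
      _ = ∑ β : {β // β ∈ Δ}, ∑ a, x a * (cR a β * eR β a') := by
          refine Finset.sum_congr rfl fun β _ => ?_
          rw [Finset.sum_mul]
          exact Finset.sum_congr rfl fun a _ => by ring
      _ = ∑ a, x a * ∑ β, cR a β * eR β a' := by
          rw [Finset.sum_comm]
          exact Finset.sum_congr rfl fun a _ => (Finset.mul_sum _ _ _).symm
      _ = ∑ a, x a * (if a' = a then 1 else 0) :=
          Finset.sum_congr rfl fun a _ => by rw [hcdR a a']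
      _ = x a' := by simp [mul_ite, Finset.sum_ite_eq]
  have hΦΨ : ∀ (F : MvPolynomial (Fin s) R), F.IsHomogeneous m →
      (∑ β : {β // β ∈ Δ},
        monomial β.1 (∑ a, (∑ β' : {β // β ∈ Δ}, coeff β'.1 F * eR β' a) * cR a β)) = F := by
    intro F hF
    have inner : ∀ β : {β // β ∈ Δ},
        (∑ a, (∑ β' : {β // β ∈ Δ}, coeff β'.1 F * eR β' a) * cR a β) = coeff β.1 F := by
      intro β
      calc ∑ a, (∑ β' : {β // β ∈ Δ}, coeff β'.1 F * eR β' a) * cR a β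
          = ∑ a, ∑ β' : {β // β ∈ Δ}, coeff β'.1 F * (eR β' a * cR a β) := by
            refine Finset.sum_congr rfl fun a _ => ?_
            rw [Finset.sum_mul]
            exact Finset.sum_congr rfl fun β' _ => by ring
        _ = ∑ β' : {β // β ∈ Δ}, coeff β'.1 F * ∑ a, eR β' a * cR a β := by
            rw [Finset.sum_comm]
            exact Finset.sum_congr rfl fun β' _ => (Finset.mul_sum _ _ _).symm
        _ = ∑ β' : {β // β ∈ Δ}, coeff β'.1 F * (if β = β' then 1 else 0) :=
            Finset.sum_congr rfl fun β' _ => by rw [hecR β' β]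
        _ = coeff β.1 F := by simp [mul_ite, Finset.sum_ite_eq]
    rw [Finset.sum_congr rfl fun β _ => by rw [inner β]]
    exact reprΔ hF
  -- assemble the equivalence
  refine ⟨{
    toFun := fun x => ⟨∑ β : {β // β ∈ Δ}, monomial β.1 (∑ a, x.1 a * cR a β), ?_⟩
    map_add' := ?_
    map_smul' := ?_
    invFun := fun F => ⟨fun a => ∑ β : {β // β ∈ Δ}, coeff β.1 F.1 * eR β a, ?_⟩
    left_inv := ?_
    right_inv := ?_ }⟩
  · -- membership in the target
    rw [Submodule.mem_inf]
    constructor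
    · rw [Submodule.restrictScalars_mem]
      rw [mem_ker_reesMap_iff f (hmonhom _)]
      rw [hΦkey]
      have hx := x.2
      rw [LinearMap.mem_ker, hcomb] at hx
      exact hx
    · exact (mem_homogeneousSubmodule _ _).mpr (hmonhom _)
  · intro x y
    apply Subtype.ext
    simp only [Submodule.coe_add, Pi.add_apply]
    rw [← Finset.sum_add_distrib]
    refine Finset.sum_congr rfl fun β _ => ?_
    rw [← map_add, ← Finset.sum_add_distrib]
    congr 1
    exact Finset.sum_congr rfl fun a _ => by ring
  · intro r x
    apply Subtype.ext
    simp only [SetLike.val_smul, Pi.smul_apply, RingHom.id_apply]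
    rw [Finset.smul_sum]
    refine Finset.sum_congr rfl fun β _ => ?_
    rw [MvPolynomial.smul_monomial, Finset.smul_sum]
    congr 1
    exact Finset.sum_congr rfl fun a _ => by simp [smul_eq_mul]; ring
  · -- membership in the kernel
    rw [LinearMap.mem_ker, hcomb]
    have hFhom : (F.1).IsHomogeneous m :=
      (mem_homogeneousSubmodule _ _).mp (Submodule.mem_inf.mp F.2).2
    rw [hΨkey _ hFhom]
    have hFker : F.1 ∈ RingHom.ker (reesMap f).toRingHom := by
      have := (Submodule.mem_inf.mp F.2).1
      rwa [Submodule.restrictScalars_mem] at this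
    exact (mem_ker_reesMap_iff f hFhom).mp hFker
  · intro x
    apply Subtype.ext
    funext a'
    exact hΨΦ x.1 a'
  · intro F
    apply Subtype.ext
    have hFhom : (F.1).IsHomogeneous m :=
      (mem_homogeneousSubmodule _ _).mp (Submodule.mem_inf.mp F.2).2
    exact hΦΨ F.1 hFhom
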